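/- Let (v_1,…,v_n) be an arbitrary valuation profile with m > n and 0 ≤ m|_n ≤ 1. Suppose that: m|_n of the agents have valuation functions that are both ⟨⌊m/n⌋−1, ⌊m/n⌋⟩-size monotonic and ⟨⌊m/n⌋, ⌊m/n⌋+1⟩-set monotonic; a different (disjoint) set of n−1−m|_n agents have ⟨⌊m/n⌋−1, ⌊m/n⌋⟩-size monotonic valuation functions; and the remaining agent has a ⟨⌊m/n⌋−1, ⌊m/n⌋⟩-set monotonic valuation function. Then an EFX allocation exists at (v_1,…,v_n). -/

import Mathlib

open Finset

/-- A valuation `v` on subsets of `E` is set monotonic if larger sets (by inclusion)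
have larger value. -/
def SetMonotonic {α : Type*} (E : Finset α) (v : Finset α → ℝ) : Prop :=
  ∀ X Y : Finset α, X ⊆ Y → Y ⊆ E → v X ≤ v Y

/-- `⟨k,l⟩`-set monotonicity: monotone along inclusions whose cardinalities lie in `[k,l]`. -/
def SetMonotonicKL {α : Type*} (E : Finset α) (k l : ℕ) (v : Finset α → ℝ) : Prop :=
  ∀ X Y : Finset α, X ⊆ Y → Y ⊆ E → k ≤ X.card → X.card < Y.card → Y.card ≤ l → v X ≤ v Y

/-- `⟨k,l⟩`-size monotonicity: any set of strictly larger cardinality (within `[k,l]`)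
has larger value. -/
def SizeMonotonic {α : Type*} (E : Finset α) (k l : ℕ) (v : Finset α → ℝ) : Prop :=
  ∀ X Y : Finset α, X ⊆ E → Y ⊆ E → X ≠ Y →
    k ≤ X.card → X.card < Y.card → Y.card ≤ l → v X ≤ v Y

/-- An allocation of the goods `E` among `n` agents: pairwise disjoint bundles
whose union is `E`. -/
def IsAllocation {α : Type*} [DecidableEq α] (E : Finset α) {n : ℕ}
    (X : Fin n → Finset α) : Prop :=
  (∀ i, X i ⊆ E) ∧ (∀ i j : Fin n, i ≠ j → Disjoint (X i) (X j)) ∧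
    Finset.univ.biUnion X = E

/-- `X E_v Y` : `X` is envy-free from `Y` up to any one item at valuation `v`. -/
def EFXpref {α : Type*} [DecidableEq α] (v : Finset α → ℝ) (X Y : Finset α) : Prop :=
  ∀ y ∈ Y, v (Y.erase y) ≤ v X

/-- An allocation is EFX at a profile `v` if every agent is envy-free up to any one good
from every other agent's bundle. -/
def IsEFX {α : Type*} [DecidableEq α] {n : ℕ} (v : Fin n → Finset α → ℝ)
    (X : Fin n → Finset α) : Prop :=
  ∀ i j : Fin n, EFXpref (v i) (X i) (X j)


/-- Choose a `q`-subset of `P` maximizing `w` (junk `∅` if impossible). -/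
noncomputable def pickQ {α : Type*} [DecidableEq α] (q : ℕ) (w : Finset α → ℝ)
    (P : Finset α) : Finset α :=
  if h : (P.powersetCard q).Nonempty then
    (Finset.exists_max_image _ w h).choose
  else ∅

lemma pickQ_spec {α : Type*} [DecidableEq α] {q : ℕ} (w : Finset α → ℝ)
    {P : Finset α} (h : q ≤ P.card) :
    pickQ q w P ⊆ P ∧ (pickQ q w P).card = q ∧
      ∀ T ⊆ P, T.card = q → w T ≤ w (pickQ q w P) := by
  have hne : (P.powersetCard q).Nonempty := Finset.powersetCard_nonempty.mpr h
  rw [pickQ, dif_pos hne]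
  obtain ⟨hmem, hmax⟩ := (Finset.exists_max_image _ w hne).choose_spec
  rw [Finset.mem_powersetCard] at hmem
  exact ⟨hmem.1, hmem.2, fun T hT hTc => hmax T (Finset.mem_powersetCard.mpr ⟨hT, hTc⟩)⟩

/-- Pools of remaining goods in the greedy allocation procedure. -/
noncomputable def poolsQ {α : Type*} [DecidableEq α] (q : ℕ) (w : ℕ → Finset α → ℝ)
    (E : Finset α) : ℕ → Finset α
  | 0 => E
  | k+1 => poolsQ q w E k \ pickQ q (w k) (poolsQ q w E k)

lemma poolsQ_succ_subset {α : Type*} [DecidableEq α] (q : ℕ) (w : ℕ → Finset α → ℝ)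
    (E : Finset α) (k : ℕ) : poolsQ q w E (k+1) ⊆ poolsQ q w E k :=
  Finset.sdiff_subset

lemma poolsQ_subset {α : Type*} [DecidableEq α] (q : ℕ) (w : ℕ → Finset α → ℝ)
    (E : Finset α) {j k : ℕ} (h : j ≤ k) : poolsQ q w E k ⊆ poolsQ q w E j := by
  induction k with
  | zero => simp_all
  | succ k ih =>
    rcases Nat.eq_or_lt_of_le h with rfl | h'
    · exact subset_rfl
    · exact (poolsQ_succ_subset q w E k).trans (ih (Nat.lt_succ_iff.mp h'))

lemma poolsQ_card {α : Type*} [DecidableEq α] (q : ℕ) (w : ℕ → Finset α → ℝ)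
    (E : Finset α) {k : ℕ} (h : k * q ≤ E.card) :
    (poolsQ q w E k).card = E.card - k * q := by
  induction k with
  | zero => simp [poolsQ]
  | succ k ih =>
    have hk : k * q ≤ E.card := le_trans (by nlinarith) h
    have hcard := ih hk
    have hkq : (k+1) * q = k * q + q := by ring
    rw [hkq] at h
    have hq : q ≤ (poolsQ q w E k).card := by
      rw [hcard]; omega
    obtain ⟨hsub, hc, _⟩ := pickQ_spec (w k) hq
    rw [poolsQ, Finset.card_sdiff_of_subset hsub, hc, hcard, hkq]
    omega

lemma poolsQ_cover {α : Type*} [DecidableEq α] (q : ℕ) (w : ℕ → Finset α → ℝ)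
    (E : Finset α) (k : ℕ) {e : α} (he : e ∈ E) :
    e ∈ poolsQ q w E k ∨ ∃ j < k, e ∈ pickQ q (w j) (poolsQ q w E j) := by
  induction k with
  | zero => exact Or.inl he
  | succ k ih =>
    rcases ih with h | ⟨j, hj, hm⟩
    · by_cases h2 : e ∈ pickQ q (w k) (poolsQ q w E k)
      · exact Or.inr ⟨k, Nat.lt_succ_self k, h2⟩
      · exact Or.inl (Finset.mem_sdiff.mpr ⟨h, h2⟩)
    · exact Or.inr ⟨j, Nat.lt_succ_of_lt hj, hm⟩

/-- Theorem 4(i): arbitrary valuation profile, `m > n`, `m mod n ≤ 1`.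
If `m mod n` agents have valuations that are both `⟨⌊m/n⌋-1, ⌊m/n⌋⟩`-size monotonic and
`⟨⌊m/n⌋, ⌊m/n⌋+1⟩`-set monotonic, a disjoint set of `n - 1 - m mod n` agents have
`⟨⌊m/n⌋-1, ⌊m/n⌋⟩`-size monotonic valuations, and the remaining agent has a
`⟨⌊m/n⌋-1, ⌊m/n⌋⟩`-set monotonic valuation, then an EFX allocation exists. -/
theorem efx_exists_relaxed_i {α : Type*} [DecidableEq α] (n m : ℕ)
    (hn : 2 ≤ n) (E : Finset α) (hE : E.card = m) (hmn : n < m)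
    (hr : m % n ≤ 1)
    (v : Fin n → Finset α → ℝ)
    (A B : Finset (Fin n)) (hAB : Disjoint A B)
    (hAcard : A.card = m % n) (hBcard : B.card = n - 1 - m % n)
    (hA : ∀ i ∈ A, SizeMonotonic E (m / n - 1) (m / n) (v i) ∧
      SetMonotonicKL E (m / n) (m / n + 1) (v i))
    (hB : ∀ i ∈ B, SizeMonotonic E (m / n - 1) (m / n) (v i))
    (hrest : ∀ i : Fin n, i ∉ A ∪ B → SetMonotonicKL E (m / n - 1) (m / n) (v i)) :
    ∃ X : Fin n → Finset α, IsAllocation E X ∧ IsEFX v X := by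
  classical
  set q := m / n with hq_def
  set r := m % n with hr_def
  have hm : m = n * q + r := by rw [hq_def, hr_def]; exact (Nat.div_add_mod m n).symm
  have hq1 : 1 ≤ q := Nat.one_le_div_iff (by omega) |>.mpr (le_of_lt hmn)
  have h2q : 2 * q ≤ n * q := Nat.mul_le_mul_right q hn
  have hqm : q < m := by omega
  have h1q : (n - 1) * q + q = n * q := by
    have h : n - 1 + 1 = n := by omega
    calc (n - 1) * q + q = (n - 1 + 1) * q := by ring
    _ = n * q := by rw [h]
  -- the remaining agent
  have hABcard : (A ∪ B).card = n - 1 := by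
    rw [Finset.card_union_of_disjoint hAB, hAcard, hBcard]; omega
  have hcompl : ((Finset.univ : Finset (Fin n)) \ (A ∪ B)).card = 1 := by
    rw [Finset.card_sdiff_of_subset (Finset.subset_univ _), hABcard, Finset.card_univ,
      Fintype.card_fin]
    omega
  obtain ⟨i₀, hi₀⟩ := Finset.card_eq_one.mp hcompl
  have hi₀AB : i₀ ∉ A ∪ B := by
    have : i₀ ∈ (Finset.univ : Finset (Fin n)) \ (A ∪ B) := by
      rw [hi₀]; exact Finset.mem_singleton_self i₀
    exact (Finset.mem_sdiff.mp this).2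
  have hnotin : ∀ i : Fin n, i ∉ A ∪ B → i = i₀ := by
    intro i hi
    have : i ∈ (Finset.univ : Finset (Fin n)) \ (A ∪ B) :=
      Finset.mem_sdiff.mpr ⟨Finset.mem_univ i, hi⟩
    rw [hi₀] at this
    exact Finset.mem_singleton.mp this
  -- the ordering of the agents
  set l : List (Fin n) := i₀ :: (B.toList ++ A.toList) with hl_def
  have hBl : B.toList.length = n - 1 - r := by rw [Finset.length_toList, hBcard]
  have hAl : A.toList.length = r := by rw [Finset.length_toList, hAcard]
  have hlen : l.length = n := by
    simp only [hl_def, List.length_cons, List.length_append, hBl, hAl]; omega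
  have hnodup : l.Nodup := by
    refine List.nodup_cons.mpr ⟨?_, ?_⟩
    · simp only [List.mem_append, Finset.mem_toList]
      intro h
      rcases h with h | h
      · exact hi₀AB (Finset.mem_union_right _ h)
      · exact hi₀AB (Finset.mem_union_left _ h)
    · refine List.Nodup.append B.nodup_toList A.nodup_toList ?_
      intro a haB haA
      exact (Finset.disjoint_left.mp hAB (Finset.mem_toList.mp haA))
        (Finset.mem_toList.mp haB)
  have hmem_l : ∀ i : Fin n, i ∈ l := by
    intro i
    by_cases hi : i ∈ A ∪ B
    · rcases Finset.mem_union.mp hi with h | h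
      · exact List.mem_cons_of_mem _ (List.mem_append_right _ (Finset.mem_toList.mpr h))
      · exact List.mem_cons_of_mem _ (List.mem_append_left _ (Finset.mem_toList.mpr h))
    · rw [hnotin i hi]; exact List.mem_cons_self
  set ag : ℕ → Fin n := fun k => l.getD k i₀ with hag_def
  set idx : Fin n → ℕ := fun i => l.idxOf i with hidx_def
  have hidx_lt : ∀ i : Fin n, idx i < n := by
    intro i
    rw [← hlen]
    exact List.idxOf_lt_length_iff.mpr (hmem_l i)
  have hag_idx : ∀ i : Fin n, ag (idx i) = i := by
    intro i
    have h : idx i < l.length := List.idxOf_lt_length_iff.mpr (hmem_l i)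
    simp only [hag_def, List.getD_eq_getElem l i₀ h, hidx_def]
    rw [List.getD_eq_getElem l i₀ h]; exact List.getElem_idxOf h
  have hidx_ag : ∀ k, k < n → idx (ag k) = k := by
    intro k hk
    have hk' : k < l.length := by omega
    have h1 : idx (ag k) < l.length := by rw [hlen]; exact hidx_lt _
    have h2 : l[idx (ag k)] = l[k] := by
      rw [← List.getD_eq_getElem l i₀ h1, ← List.getD_eq_getElem l i₀ hk']
      exact hag_idx (ag k)
    exact (hnodup.getElem_inj_iff).mp h2
  have hag0 : ag 0 = i₀ := rfl
  have hagB : ∀ k, 0 < k → k < n - r → ag k ∈ B := by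
    intro k hk0 hkr
    obtain ⟨j, rfl⟩ : ∃ j, k = j + 1 := ⟨k - 1, by omega⟩
    have hjB : j < B.toList.length := by rw [hBl]; omega
    have : ag (j+1) = B.toList.getD j i₀ := by
      simp only [hag_def, hl_def, List.getD_cons_succ]
      exact List.getD_append _ _ _ _ hjB
    rw [this, List.getD_eq_getElem _ _ hjB]
    exact Finset.mem_toList.mp (List.getElem_mem hjB)
  have hagA : ∀ k, n - r ≤ k → k < n → ag k ∈ A := by
    intro k hkr hkn
    obtain ⟨j, rfl⟩ : ∃ j, k = j + 1 := ⟨k - 1, by omega⟩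
    have hjB : B.toList.length ≤ j := by rw [hBl]; omega
    have hjA : j - B.toList.length < A.toList.length := by rw [hAl, hBl]; omega
    have : ag (j+1) = A.toList.getD (j - B.toList.length) i₀ := by
      simp only [hag_def, hl_def, List.getD_cons_succ]
      exact List.getD_append_right _ _ _ _ hjB
    rw [this, List.getD_eq_getElem _ _ hjA]
    exact Finset.mem_toList.mp (List.getElem_mem hjA)
  -- the greedy allocation
  set w : ℕ → Finset α → ℝ := fun k => v (ag k) with hw_def
  set P : ℕ → Finset α := poolsQ q w E with hP_def
  set b : ℕ → Finset α := fun k => if k = n - 1 then P (n-1) else pickQ q (w k) (P k)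
    with hb_def
  have hb_last : b (n-1) = P (n-1) := if_pos rfl
  have hb_lt : ∀ k, k < n - 1 → b k = pickQ q (w k) (P k) := fun k hk =>
    if_neg (Nat.ne_of_lt hk)
  have hP0 : P 0 = E := rfl
  have hPE : ∀ k, P k ⊆ E := fun k => poolsQ_subset q w E (Nat.zero_le k)
  have hPcard : ∀ k, k ≤ n → (P k).card = m - k * q := by
    intro k hk
    have hkq : k * q ≤ E.card := by
      rw [hE]
      have : k * q ≤ n * q := Nat.mul_le_mul_right q hk
      omega
    rw [hP_def, poolsQ_card q w E hkq, hE]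
  have hPq : ∀ k, k ≤ n - 1 → q + r ≤ (P k).card := by
    intro k hk
    rw [hPcard k (by omega)]
    have h1 : k * q ≤ (n-1) * q := Nat.mul_le_mul_right q hk
    omega
  have hbP : ∀ k, k ≤ n - 1 → b k ⊆ P k := by
    intro k hk
    rcases Nat.lt_or_ge k (n-1) with h | h
    · rw [hb_lt k h]
      exact (pickQ_spec (w k) (by have := hPq k hk; omega)).1
    · have : k = n - 1 := by omega
      rw [this, hb_last]
  have hbE : ∀ k, k ≤ n - 1 → b k ⊆ E := fun k hk => (hbP k hk).trans (hPE k)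
  have hbcard : ∀ k, k < n - 1 → (b k).card = q := by
    intro k hk
    rw [hb_lt k hk]
    exact (pickQ_spec (w k) (by have := hPq k (by omega); omega)).2.1
  have hblast_card : (b (n-1)).card = q + r := by
    rw [hb_last, hPcard (n-1) (by omega)]
    omega
  have hmax : ∀ k, k < n - 1 → ∀ T ⊆ P k, T.card = q → w k T ≤ w k (b k) := by
    intro k hk T hT hTc
    rw [hb_lt k hk]
    exact (pickQ_spec (w k) (by have := hPq k (by omega); omega)).2.2 T hT hTc
  have hPsubP : ∀ j k : ℕ, j ≤ k → P k ⊆ P j := fun j k h => poolsQ_subset q w E h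
  have hdisj : ∀ j k, j < k → k ≤ n - 1 → Disjoint (b j) (b k) := by
    intro j k hjk hk
    have h1 : b k ⊆ P (j+1) := (hbP k hk).trans (hPsubP (j+1) k hjk)
    have h2 : P (j+1) = P j \ b j := by
      rw [hb_lt j (by omega)]; rfl
    rw [h2] at h1
    exact Finset.disjoint_left.mpr fun a ha hak =>
      (Finset.mem_sdiff.mp (h1 hak)).2 ha
  set X : Fin n → Finset α := fun i => b (idx i) with hX_def
  have hidx_le : ∀ i : Fin n, idx i ≤ n - 1 := fun i => by have := hidx_lt i; omega
  refine ⟨X, ⟨?_, ?_, ?_⟩, ?_⟩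
  · intro i
    exact hbE (idx i) (hidx_le i)
  · intro i j hij
    have hne : idx i ≠ idx j := by
      intro h
      apply hij
      rw [← hag_idx i, ← hag_idx j, h]
    rcases Nat.lt_or_ge (idx i) (idx j) with h | h
    · exact hdisj (idx i) (idx j) h (hidx_le j)
    · exact (hdisj (idx j) (idx i) (by omega) (hidx_le i)).symm
  · apply Finset.Subset.antisymm
    · intro e he
      obtain ⟨i, _, hei⟩ := Finset.mem_biUnion.mp he
      exact hbE (idx i) (hidx_le i) hei
    · intro e he
      rcases poolsQ_cover q w E (n-1) he with h | ⟨k, hk, hmem⟩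
      · refine Finset.mem_biUnion.mpr ⟨ag (n-1), Finset.mem_univ _, ?_⟩
        show e ∈ b (idx (ag (n-1)))
        rw [hidx_ag (n-1) (by omega), hb_last]
        exact h
      · refine Finset.mem_biUnion.mpr ⟨ag k, Finset.mem_univ _, ?_⟩
        show e ∈ b (idx (ag k))
        rw [hidx_ag k (by omega), hb_lt k hk]
        exact hmem
  -- EFX
  intro i j y hy
  have hyb : y ∈ b (idx j) := hy
  have hvi : w (idx i) = v i := by rw [hw_def]; simp only []; rw [hag_idx i]
  set Z := (X j).erase y with hZ_def
  have hZE : Z ⊆ E := (Finset.erase_subset _ _).trans (hbE (idx j) (hidx_le j))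
  have hXiE : X i ⊆ E := hbE (idx i) (hidx_le i)
  have hZc : Z.card = (b (idx j)).card - 1 := Finset.card_erase_of_mem hyb
  by_cases hbig : idx j = n - 1 ∧ r = 1
  · -- the envied bundle has size q+1
    have hZq : Z.card = q := by rw [hZc, hbig.1, hblast_card, hbig.2]; omega
    have hZP : Z ⊆ P (n-1) := by
      have : X j ⊆ P (n-1) := by
        show b (idx j) ⊆ P (n-1)
        rw [hbig.1, hb_last]
      exact (Finset.erase_subset _ _).trans this
    rcases Nat.lt_or_ge (idx i) (n-1) with hki | hki
    · have h := hmax (idx i) hki Z (hZP.trans (hPsubP (idx i) (n-1) (by omega))) hZq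
      rw [hvi] at h
      exact h
    · -- i is the A agent; idx i = n - 1 = idx j, so i = j
      have hki' : idx i = n - 1 := by have := hidx_le i; omega
      have hij : i = j := by
        rw [← hag_idx i, ← hag_idx j, hki', hbig.1]
      have hiA : i ∈ A := by
        rw [← hag_idx i, hki']
        exact hagA (n-1) (by omega) (by omega)
      have hXic : (X i).card = q + 1 := by
        show (b (idx i)).card = q + 1
        rw [hki', hblast_card, hbig.2]
      refine (hA i hiA).2 Z (X i) ?_ hXiE ?_ ?_ ?_
      · rw [hZ_def, hij]
        exact Finset.erase_subset _ _
      · omega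
      · omega
      · omega
  · -- the envied bundle minus one good has size q - 1
    have hZq : Z.card = q - 1 := by
      rcases Nat.lt_or_ge (idx j) (n-1) with hkj | hkj
      · rw [hZc, hbcard (idx j) hkj]
      · have hkj' : idx j = n - 1 := by have := hidx_le j; omega
        have hr0 : r = 0 := by
          rcases Nat.eq_zero_or_pos r with h | h
          · exact h
          · exact absurd ⟨hkj', by omega⟩ hbig
        rw [hZc, hkj', hblast_card, hr0]; omega
    by_cases hki0 : idx i = 0
    · -- i is the remaining agent i₀
      have hii₀ : i = i₀ := by rw [← hag_idx i, hki0]; exact hag0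
      have hmono := hrest i (by rw [hii₀]; exact hi₀AB)
      have hlt : Z.card < E.card := by rw [hE, hZq]; omega
      obtain ⟨g, hgE, hgZ⟩ : ∃ g ∈ E, g ∉ Z := by
        by_contra hcon
        push_neg at hcon
        exact absurd (Finset.card_le_card hcon) (by omega)
      have hSE : insert g Z ⊆ E := Finset.insert_subset hgE hZE
      have hSc : (insert g Z).card = q := by
        rw [Finset.card_insert_of_notMem hgZ, hZq]; omega
      have step1 : v i Z ≤ v i (insert g Z) :=
        hmono Z (insert g Z) (Finset.subset_insert g Z) hSE (by omega)
          (by rw [Finset.card_insert_of_notMem hgZ]; omega) (by omega)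
      have step2 : w 0 (insert g Z) ≤ w 0 (b 0) := hmax 0 (by omega) (insert g Z) hSE hSc
      rw [← hki0, hvi] at step2
      exact le_trans step1 step2
    · by_cases hkiA : idx i = n - 1 ∧ r = 1
      · -- i is the A agent
        have hiA : i ∈ A := by
          rw [← hag_idx i, hkiA.1]
          exact hagA (n-1) (by omega) (by omega)
        have hXic : (X i).card = q + 1 := by
          show (b (idx i)).card = q + 1
          rw [hkiA.1, hblast_card, hkiA.2]
        obtain ⟨S, hSsub, hSc⟩ := Finset.exists_subset_card_eq
          (show q ≤ (X i).card by omega)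
        have hSE : S ⊆ E := hSsub.trans hXiE
        have step1 : v i Z ≤ v i S :=
          (hA i hiA).1 Z S hZE hSE (by intro h; rw [h] at hZq; omega)
            (by omega) (by omega) (by omega)
        have step2 : v i S ≤ v i (X i) :=
          (hA i hiA).2 S (X i) hSsub hXiE (by omega) (by omega) (by omega)
        exact le_trans step1 step2
      · -- i is a B agent
        have hiB : i ∈ B := by
          have hki_lt : idx i < n - r := by
            have h1 := hidx_le i
            rcases Nat.eq_zero_or_pos r with h | h
            · omega
            · have hr1 : r = 1 := by omega
              have h2 : idx i ≠ n - 1 := fun hc => hkiA ⟨hc, hr1⟩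
              omega
          rw [← hag_idx i]
          exact hagB (idx i) (by omega) hki_lt
        have hXic : (X i).card = q := by
          show (b (idx i)).card = q
          rcases Nat.lt_or_ge (idx i) (n-1) with h | h
          · exact hbcard (idx i) h
          · have h' : idx i = n - 1 := by have := hidx_le i; omega
            have hr0 : r = 0 := by
              rcases Nat.eq_zero_or_pos r with h0 | h0
              · exact h0
              · exact absurd ⟨h', by omega⟩ hkiA
            rw [h', hblast_card, hr0]; omega
        exact hB i hiB Z (X i) hZE hXiE (by intro h; rw [h] at hZq; omega)
          (by omega) (by omega) (by omega)
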